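/- arXiv:1512.09278 — 3 statements merged into one kernel-verified Lean document; each statement's English description precedes it below -/
import Mathlib

section
/- For every integer k and every real λ ≠ 0, the function v_k is differentiable at λ and satisfies both (e^λ + e^{−λ} + 2)·v_k'(λ)/(e^λ − e^{−λ}) = ((2k+1)/2)·(v_{k−1}(λ) − v_k(λ)) and v_k'(λ)/(e^λ − e^{−λ}) = ((2k+1)/8)·(v_{k−1}(λ) − 2·v_k(λ) + v_{k+1}(λ)). -/
/-- `v k λ = ((e^λ − 1)/(e^λ + 1))^{2k+1}`, an integer (possibly negative) power. -/
noncomputable def v (k : ℤ) (l : ℝ) : ℝ :=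
  ((Real.exp l - 1) / (Real.exp l + 1)) ^ (2 * k + 1)

/-- The actions of `x∂_x` and `∂_x` (with `x = e^λ + e^{−λ} + 2`) on `v_k`:
`x∂_x v_k = ((2k+1)/2)(v_{k−1} − v_k)` and
`∂_x v_k = ((2k+1)/8)(v_{k−1} − 2v_k + v_{k+1})`. -/
theorem stmt17 (k : ℤ) (l : ℝ) (hl : l ≠ 0) :
    DifferentiableAt ℝ (v k) l ∧
    (Real.exp l + Real.exp (-l) + 2) * deriv (v k) l /
        (Real.exp l - Real.exp (-l)) =
      ((2 * (k : ℝ) + 1) / 2) * (v (k - 1) l - v k l) ∧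
    deriv (v k) l / (Real.exp l - Real.exp (-l)) =
      ((2 * (k : ℝ) + 1) / 8) * (v (k - 1) l - 2 * v k l + v (k + 1) l) := by
  set E := Real.exp l with hE
  have hE0 : 0 < E := Real.exp_pos l
  have hE1 : E ≠ 1 := by simpa [hE, Real.exp_eq_one_iff] using hl
  have hEm1 : E - 1 ≠ 0 := sub_ne_zero.mpr hE1
  have hEp1 : E + 1 ≠ 0 := by positivity
  have hEne : E ≠ 0 := ne_of_gt hE0
  set t : ℝ := (E - 1) / (E + 1) with htdef
  have ht0 : t ≠ 0 := div_ne_zero hEm1 hEp1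
  have hbase : HasDerivAt (fun x => (Real.exp x - 1) / (Real.exp x + 1))
      ((Real.exp l * (E + 1) - (E - 1) * Real.exp l) / (E + 1) ^ 2) l :=
    ((Real.hasDerivAt_exp l).sub_const 1).div
      ((Real.hasDerivAt_exp l).add_const 1) hEp1
  have hv : HasDerivAt (v k)
      (((2 * k + 1 : ℤ) : ℝ) * t ^ (2 * k + 1 - 1) *
        ((E * (E + 1) - (E - 1) * E) / (E + 1) ^ 2)) l := by
    have := (hasDerivAt_zpow (2 * k + 1) t (Or.inl ht0)).comp l hbase
    exact this
  have hdiff : DifferentiableAt ℝ (v k) l := hv.differentiableAt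
  have hderiv : deriv (v k) l =
      ((2 * k + 1 : ℤ) : ℝ) * t ^ (2 * k + 1 - 1) *
        ((E * (E + 1) - (E - 1) * E) / (E + 1) ^ 2) := hv.deriv
  have hexpneg : Real.exp (-l) = E⁻¹ := by rw [Real.exp_neg, hE]
  set T : ℝ := t ^ (2 * k - 1) with hT
  have hvk : v k l = T * (t * t) := by
    rw [v, ← htdef, hT, show (2 * k + 1 : ℤ) = (2 * k - 1) + 1 + 1 by ring,
      zpow_add₀ ht0, zpow_add₀ ht0, zpow_one]
    ring
  have hvkm : v (k - 1) l = T := by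
    rw [v, ← htdef, hT]; norm_num; ring_nf
  have hvkp : v (k + 1) l = T * (t * t * t * t) := by
    rw [v, ← htdef, hT, show (2 * (k + 1) + 1 : ℤ) = (2 * k - 1) + 1 + 1 + 1 + 1 by ring,
      zpow_add₀ ht0, zpow_add₀ ht0, zpow_add₀ ht0, zpow_add₀ ht0, zpow_one]
    ring
  have hpow : t ^ (2 * k + 1 - 1) = T * t := by
    rw [hT, show (2 * k + 1 - 1 : ℤ) = (2 * k - 1) + 1 by ring, zpow_add₀ ht0, zpow_one]
  have hsub : E - E⁻¹ = (E - 1) * (E + 1) / E := by field_simp; ring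
  have hplus : E + E⁻¹ + 2 = (E + 1) ^ 2 / E := by field_simp; ring
  have hk : ((2 * k + 1 : ℤ) : ℝ) = 2 * (k : ℝ) + 1 := by push_cast; ring
  refine ⟨hdiff, ?_, ?_⟩
  · rw [hderiv, hexpneg, hpow, hvk, hvkm, hsub, hplus, hk, htdef]
    field_simp
    ring
  · rw [hderiv, hexpneg, hpow, hvk, hvkm, hvkp, hsub, hk, htdef]
    field_simp
    ring
end

section
/- Let k be an integer, and for real μ ≠ 0 define g₁(μ) := (e^μ + e^{−μ} + 2)·v_k'(μ)/(e^μ − e^{−μ}) and g₂(μ) := (e^μ + e^{−μ} + 2)·g₁'(μ)/(e^μ − e^{−μ}) + g₁(μ). Then for every real λ ≠ 0, g₂ is differentiable at λ and g₂'(λ)/(e^λ − e^{−λ}) = ((2k+1)(2k−1)(2k−3)/32)·v_{k−3}(λ) − ((2k+1)(2k−1)(k−1)/4)·v_{k−2}(λ) + (3(2k+1)(2k−1)²/16)·v_{k−1}(λ) − ((2k+1)k(2k−1)/4)·v_k(λ) + ((2k+1)²(2k−1)/32)·v_{k+1}(λ). -/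
noncomputable def f (l : ℝ) : ℝ := (Real.exp l - 1) / (Real.exp l + 1)

lemma hf_deriv (l : ℝ) : HasDerivAt f ((1 - f l ^ 2) / 2) l := by
  have hE := Real.exp_pos l
  have h1 : Real.exp l + 1 ≠ 0 := by positivity
  have h := ((Real.hasDerivAt_exp l).sub_const 1).div ((Real.hasDerivAt_exp l).add_const 1) h1
  refine h.congr_deriv ?_
  unfold f
  field_simp
  ring

lemma f_ne_zero {l : ℝ} (hl : l ≠ 0) : f l ≠ 0 := by
  unfold f
  have h1 : Real.exp l + 1 ≠ 0 := by positivity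
  have h2 : Real.exp l - 1 ≠ 0 := by
    intro h
    exact hl ((Real.exp_eq_one_iff _).mp (by linarith))
  exact div_ne_zero h2 h1

example : True := trivial

lemma v_eq (j : ℤ) (l : ℝ) : v j l = f l ^ (2 * j + 1) := rfl

lemma hvd (j : ℤ) {l : ℝ} (hl : l ≠ 0) :
    HasDerivAt (v j) (((2 * j + 1 : ℤ) : ℝ) * f l ^ (2 * j) * ((1 - f l ^ 2) / 2)) l := by
  have h := (hasDerivAt_zpow (2 * j + 1) (f l) (Or.inl (f_ne_zero hl))).comp l (hf_deriv l)
  have e : (2 * j + 1 - 1 : ℤ) = 2 * j := by ring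
  rw [e] at h
  exact h

lemma f_sq_lt_one (l : ℝ) : f l ^ 2 < 1 := by
  have hE := Real.exp_pos l
  have h1 : (0:ℝ) < (Real.exp l + 1) ^ 2 := by positivity
  unfold f
  rw [div_pow, div_lt_one h1]
  nlinarith

lemma one_sub_f_sq_ne (l : ℝ) : 1 - f l ^ 2 ≠ 0 := by
  have := f_sq_lt_one l
  intro h; linarith

lemma key_S (l : ℝ) : (Real.exp l - Real.exp (-l)) * (1 - f l ^ 2) = 4 * f l := by
  have hE := Real.exp_pos l
  have h1 : Real.exp l + 1 ≠ 0 := by positivity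
  have hE0 : Real.exp l ≠ 0 := ne_of_gt hE
  unfold f
  rw [Real.exp_neg]
  field_simp
  ring

lemma S_eq (l : ℝ) : Real.exp l - Real.exp (-l) = 4 * f l / (1 - f l ^ 2) := by
  rw [eq_div_iff (one_sub_f_sq_ne l)]
  exact key_S l

lemma hvS (j : ℤ) {l : ℝ} (hl : l ≠ 0) :
    HasDerivAt (v j) ((Real.exp l - Real.exp (-l)) *
      (((2 * j + 1 : ℤ) : ℝ) / 8 * (v (j - 1) l - 2 * v j l + v (j + 1) l))) l := by
  have h := hvd j hl
  have hF := f_ne_zero hl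
  have hF2 := one_sub_f_sq_ne l
  have eA : v (j - 1) l = f l ^ (2 * j + 1) * (f l ^ 2)⁻¹ := by
    rw [v_eq, show (2 * (j - 1) + 1 : ℤ) = (2 * j + 1) + (-2) by ring, zpow_add₀ hF]
    norm_num
  have eB : v (j + 1) l = f l ^ (2 * j + 1) * f l ^ 2 := by
    rw [v_eq, show (2 * (j + 1) + 1 : ℤ) = (2 * j + 1) + 2 by ring, zpow_add₀ hF]
    norm_num
  have eC : f l ^ (2 * j) = f l ^ (2 * j + 1) * (f l)⁻¹ := by
    rw [zpow_add_one₀ hF, mul_assoc, mul_inv_cancel₀ hF, mul_one]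
  convert h using 1
  rw [v_eq j l, eA, eB, eC, S_eq l]
  generalize f l ^ (2 * j + 1 : ℤ) = V
  field_simp
  ring

lemma key_X {l : ℝ} (hl : l ≠ 0) :
    (Real.exp l + Real.exp (-l) + 2) = (Real.exp l - Real.exp (-l)) / f l := by
  have hE := Real.exp_pos l
  have h1 : Real.exp l + 1 ≠ 0 := by positivity
  have h2 : Real.exp l - 1 ≠ 0 := fun h => hl ((Real.exp_eq_one_iff _).mp (by linarith))
  have hE0 : Real.exp l ≠ 0 := ne_of_gt hE
  rw [eq_div_iff (f_ne_zero hl)]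
  unfold f
  rw [Real.exp_neg]
  field_simp
  ring

lemma hvX (j : ℤ) {l : ℝ} (hl : l ≠ 0) :
    (Real.exp l + Real.exp (-l) + 2) *
      (((2 * j + 1 : ℤ) : ℝ) * f l ^ (2 * j) * ((1 - f l ^ 2) / 2)) /
      (Real.exp l - Real.exp (-l)) =
    ((2 * j + 1 : ℤ) : ℝ) / 2 * (v (j - 1) l - v j l) := by
  have hF := f_ne_zero hl
  have hF2 := one_sub_f_sq_ne l
  have eA : v (j - 1) l = f l ^ (2 * j + 1) * (f l ^ 2)⁻¹ := by
    rw [v_eq, show (2 * (j - 1) + 1 : ℤ) = (2 * j + 1) + (-2) by ring, zpow_add₀ hF]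
    norm_num
  have eC : f l ^ (2 * j) = f l ^ (2 * j + 1) * (f l)⁻¹ := by
    rw [zpow_add_one₀ hF, mul_assoc, mul_inv_cancel₀ hF, mul_one]
  rw [key_X hl, v_eq j l, eA, eC, S_eq l]
  generalize f l ^ (2 * j + 1 : ℤ) = V
  field_simp

lemma S_ne {l : ℝ} (hl : l ≠ 0) : Real.exp l - Real.exp (-l) ≠ 0 := by
  intro h
  have : Real.exp l = Real.exp (-l) := by linarith
  have := Real.exp_injective this
  apply hl
  linarith

/-- The action of `∂_x (x∂_x + 1) x∂_x` (with `x = e^λ + e^{−λ} + 2`) on `v_k`.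
Here `g₁ = x∂_x v_k` and `g₂ = (x∂_x + 1) g₁`. -/
theorem stmt18 (k : ℤ) (g₁ g₂ : ℝ → ℝ)
    (hg₁ : ∀ μ : ℝ, μ ≠ 0 →
      g₁ μ = (Real.exp μ + Real.exp (-μ) + 2) * deriv (v k) μ /
        (Real.exp μ - Real.exp (-μ)))
    (hg₂ : ∀ μ : ℝ, μ ≠ 0 →
      g₂ μ = (Real.exp μ + Real.exp (-μ) + 2) * deriv g₁ μ /
        (Real.exp μ - Real.exp (-μ)) + g₁ μ)
    (l : ℝ) (hl : l ≠ 0) :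
    DifferentiableAt ℝ g₂ l ∧
    deriv g₂ l / (Real.exp l - Real.exp (-l)) =
      ((2 * (k : ℝ) + 1) * (2 * (k : ℝ) - 1) * (2 * (k : ℝ) - 3) / 32) * v (k - 3) l
      - ((2 * (k : ℝ) + 1) * (2 * (k : ℝ) - 1) * ((k : ℝ) - 1) / 4) * v (k - 2) l
      + (3 * (2 * (k : ℝ) + 1) * (2 * (k : ℝ) - 1) ^ 2 / 16) * v (k - 1) l
      - ((2 * (k : ℝ) + 1) * (k : ℝ) * (2 * (k : ℝ) - 1) / 4) * v k l
      + ((2 * (k : ℝ) + 1) ^ 2 * (2 * (k : ℝ) - 1) / 32) * v (k + 1) l := by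
  -- g₁ agrees with an explicit function off 0
  have hG1 : ∀ μ : ℝ, μ ≠ 0 →
      g₁ μ = ((2 * k + 1 : ℤ) : ℝ) / 2 * (v (k - 1) μ - v k μ) := by
    intro μ hμ
    rw [hg₁ μ hμ, (hvd k hμ).deriv]
    exact hvX k hμ
  -- derivative of g₁ off 0
  have hdg1 : ∀ μ : ℝ, μ ≠ 0 →
      deriv g₁ μ = ((2 * k + 1 : ℤ) : ℝ) / 2 *
        ((((2 * (k - 1) + 1 : ℤ)) : ℝ) * f μ ^ (2 * (k - 1)) * ((1 - f μ ^ 2) / 2)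
          - ((2 * k + 1 : ℤ) : ℝ) * f μ ^ (2 * k) * ((1 - f μ ^ 2) / 2)) := by
    intro μ hμ
    have hev : g₁ =ᶠ[nhds μ] fun x => ((2 * k + 1 : ℤ) : ℝ) / 2 * (v (k - 1) x - v k x) :=
      Filter.eventuallyEq_of_mem (compl_singleton_mem_nhds hμ) (fun x hx => hG1 x hx)
    rw [hev.deriv_eq]
    exact (((hvd (k - 1) hμ).sub (hvd k hμ)).const_mul _).deriv
  -- g₂ agrees with an explicit function off 0
  have hG2 : ∀ μ : ℝ, μ ≠ 0 →
      g₂ μ = ((2 * k + 1 : ℤ) : ℝ) / 2 *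
          (((2 * (k - 1) + 1 : ℤ) : ℝ) / 2 * (v (k - 2) μ - v (k - 1) μ)
            - ((2 * k + 1 : ℤ) : ℝ) / 2 * (v (k - 1) μ - v k μ))
        + ((2 * k + 1 : ℤ) : ℝ) / 2 * (v (k - 1) μ - v k μ) := by
    intro μ hμ
    have h1 := hvX (k - 1) hμ
    rw [show (k - 1 - 1 : ℤ) = k - 2 by ring] at h1
    have h0 := hvX k hμ
    rw [hg₂ μ hμ, hdg1 μ hμ, hG1 μ hμ]
    linear_combination (((2 * k + 1 : ℤ) : ℝ) / 2) * h1 - (((2 * k + 1 : ℤ) : ℝ) / 2) * h0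
  -- derivatives of the explicit pieces at l
  have d2 := hvS (k - 2) hl
  rw [show (k - 2 - 1 : ℤ) = k - 3 by ring, show (k - 2 + 1 : ℤ) = k - 1 by ring] at d2
  have d1 := hvS (k - 1) hl
  rw [show (k - 1 - 1 : ℤ) = k - 2 by ring, show (k - 1 + 1 : ℤ) = k by ring] at d1
  have d0 := hvS k hl
  have hGd : HasDerivAt (fun μ => ((2 * k + 1 : ℤ) : ℝ) / 2 *
          (((2 * (k - 1) + 1 : ℤ) : ℝ) / 2 * (v (k - 2) μ - v (k - 1) μ)
            - ((2 * k + 1 : ℤ) : ℝ) / 2 * (v (k - 1) μ - v k μ))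
        + ((2 * k + 1 : ℤ) : ℝ) / 2 * (v (k - 1) μ - v k μ))
      (((2 * k + 1 : ℤ) : ℝ) / 2 *
          (((2 * (k - 1) + 1 : ℤ) : ℝ) / 2 *
              ((Real.exp l - Real.exp (-l)) * (((2 * (k - 2) + 1 : ℤ) : ℝ) / 8 *
                  (v (k - 3) l - 2 * v (k - 2) l + v (k - 1) l))
                - (Real.exp l - Real.exp (-l)) * (((2 * (k - 1) + 1 : ℤ) : ℝ) / 8 *
                  (v (k - 2) l - 2 * v (k - 1) l + v k l)))
            - ((2 * k + 1 : ℤ) : ℝ) / 2 *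
              ((Real.exp l - Real.exp (-l)) * (((2 * (k - 1) + 1 : ℤ) : ℝ) / 8 *
                  (v (k - 2) l - 2 * v (k - 1) l + v k l))
                - (Real.exp l - Real.exp (-l)) * (((2 * k + 1 : ℤ) : ℝ) / 8 *
                  (v (k - 1) l - 2 * v k l + v (k + 1) l))))
        + ((2 * k + 1 : ℤ) : ℝ) / 2 *
            ((Real.exp l - Real.exp (-l)) * (((2 * (k - 1) + 1 : ℤ) : ℝ) / 8 *
                (v (k - 2) l - 2 * v (k - 1) l + v k l))
              - (Real.exp l - Real.exp (-l)) * (((2 * k + 1 : ℤ) : ℝ) / 8 *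
                (v (k - 1) l - 2 * v k l + v (k + 1) l)))) l := by
    exact ((((d2.sub d1).const_mul _).sub ((d1.sub d0).const_mul _)).const_mul _).add
      ((d1.sub d0).const_mul _)
  have hev2 : g₂ =ᶠ[nhds l] _ :=
    Filter.eventuallyEq_of_mem (compl_singleton_mem_nhds hl) (fun x hx => hG2 x hx)
  have hg2d : HasDerivAt g₂ _ l := hGd.congr_of_eventuallyEq hev2
  refine ⟨hg2d.differentiableAt, ?_⟩
  rw [hg2d.deriv, div_eq_iff (S_ne hl)]
  push_cast
  ring
end

section
/- For every real λ ≠ 0, the genus-one one-loop mean of the Laguerre ensemble admits the expansion s_{1,1}(λ) + 2·s_{1,0}(λ) = (1/256)·( v_{−3}(λ) − 4·v_{−2}(λ) + 6·v_{−1}(λ) − 4·v_0(λ) + v_1(λ) ), where s_{k,β}(λ) := (e^λ + e^{−λ})^β/(e^λ − e^{−λ})^{2k+3}. -/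
/-- `s k β λ = (e^λ + e^{−λ})^β / (e^λ − e^{−λ})^{2k+3}`. -/
noncomputable def s (k β : ℕ) (l : ℝ) : ℝ :=
  (Real.exp l + Real.exp (-l)) ^ β / (Real.exp l - Real.exp (-l)) ^ (2 * k + 3)

/-- The genus-one one-loop mean `W_1^{(1)} = s_{1,1} + 2 s_{1,0}` of the Laguerre
ensemble in terms of the times `v_k`. -/
theorem stmt19 (l : ℝ) (hl : l ≠ 0) :
    s 1 1 l + 2 * s 1 0 l =
      (1 / 256) *
        (v (-3) l - 4 * v (-2) l + 6 * v (-1) l - 4 * v 0 l + v 1 l) := by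
  have ht : (0:ℝ) < Real.exp l := Real.exp_pos l
  have ht1 : Real.exp l ≠ 1 := fun h => hl (Real.exp_eq_exp.mp (h.trans Real.exp_zero.symm))
  set t := Real.exp l with htdef
  have h0 : t ≠ 0 := ne_of_gt ht
  have hm : t - 1 ≠ 0 := sub_ne_zero.mpr ht1
  have hp : t + 1 ≠ 0 := by positivity
  have hexp : Real.exp (-l) = t⁻¹ := by rw [Real.exp_neg]
  have key : t - t⁻¹ = (t - 1) * (t + 1) / t := by field_simp; ring
  have key2 : t + t⁻¹ = (t ^ 2 + 1) / t := by field_simp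
  simp only [s, v, hexp, ← htdef, key, key2]
  rw [show (2 * (-3:ℤ) + 1) = -(5:ℤ) by ring, show (2 * (-2:ℤ) + 1) = -(3:ℤ) by ring,
    show (2 * (-1:ℤ) + 1) = -(1:ℤ) by ring, show (2 * (0:ℤ) + 1) = (1:ℤ) by ring,
    show (2 * (1:ℤ) + 1) = (3:ℤ) by ring]
  rw [zpow_neg, zpow_neg, zpow_neg, zpow_one,
    show ((5:ℤ)) = ((5:ℕ):ℤ) by norm_num, show ((3:ℤ)) = ((3:ℕ):ℤ) by norm_num,
    zpow_natCast, zpow_natCast]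
  rw [div_pow, div_pow, div_pow, div_pow]
  field_simp
  ring
end
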